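/- The category F, whose objects are full embeddings j : A_τ ↪ A_λ of small categories and whose morphisms are commutative squares, is cartesian closed; the internal hom [B,C] has tight part [B,C]_τ = F(B,C) (morphisms of F from B to C) and loose part [B,C]_λ = Cat(B_λ, C_λ), with the evident inclusion. -/

import Mathlib

open CategoryTheory

universe u

/-- The property of being a full embedding: fully faithful and injective on objects. -/
def IsFullEmbedding (X : Arrow Cat.{u, u}) : Prop :=
  (X.hom.toFunctor : ↥X.left ⥤ ↥X.right).Full ∧ (X.hom.toFunctor : ↥X.left ⥤ ↥X.right).Faithful ∧
    Function.Injective (X.hom.toFunctor : ↥X.left ⥤ ↥X.right).obj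

/-- The category `F` of full embeddings. -/
abbrev FCat : Type (u + 1) := ObjectProperty.FullSubcategory IsFullEmbedding.{u}

/-- The hom-category `F(B, C)` of the 2-category `F`: objects are morphisms of `F`
from `B` to `C`, and 2-cells are natural transformations between the loose parts
(which uniquely determine the corresponding transformations between tight parts). -/
def FHom (B C : FCat.{u}) : Type u := B ⟶ C

instance (B C : FCat.{u}) : Category.{u} (FHom B C) :=
  InducedCategory.instCategory
    (F := fun f : B ⟶ C => (f.hom.right.toFunctor : ↥B.obj.right ⥤ ↥C.obj.right))

/-- The class `ChosenFiniteProducts` with its former meaning (a chosen limit cone for every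
binary product and a chosen terminal object). -/
class ChosenFiniteProducts (C : Type*) [Category C] where
  product : (X Y : C) → Limits.LimitCone (Limits.pair X Y)
  terminal : Limits.LimitCone (Functor.empty.{0} C)

/-- `CartesianClosed` with its former meaning: monoidal closed for the monoidal structure
induced by the chosen finite products. -/
abbrev CartesianClosed (C : Type*) [Category C] [ChosenFiniteProducts C] :=
  @MonoidalClosed C _ (CartesianMonoidalCategory.ofChosenFiniteProducts
    ChosenFiniteProducts.terminal ChosenFiniteProducts.product).toMonoidalCategory

namespace FCCAux
open CategoryTheory Limits MonoidalCategory Functor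

section Toolkit

variable {C D E : Type*} [Category C] [Category D] [Category E]

/-- Lift a functor along a fully faithful functor, given an object-level factorization. -/
noncomputable def feLift (G : D ⥤ E) [G.Full] [G.Faithful] (F : C ⥤ E) (o : C → D)
    (ho : ∀ X, G.obj (o X) = F.obj X) : C ⥤ D where
  obj := o
  map {X Y} f := G.preimage (eqToHom (ho X) ≫ F.map f ≫ eqToHom (ho Y).symm)
  map_id X := G.map_injective (by simp)
  map_comp f g := G.map_injective (by simp)

lemma feLift_comp (G : D ⥤ E) [G.Full] [G.Faithful] (F : C ⥤ E) (o : C → D)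
    (ho : ∀ X, G.obj (o X) = F.obj X) : feLift G F o ho ⋙ G = F :=
  CategoryTheory.Functor.ext ho (by intro X Y f; simp [feLift])

lemma feCancel (G : D ⥤ E) [G.Faithful] (hinj : Function.Injective G.obj)
    {F₁ F₂ : C ⥤ D} (h : F₁ ⋙ G = F₂ ⋙ G) : F₁ = F₂ :=
  CategoryTheory.Functor.ext (fun X => hinj (CategoryTheory.Functor.congr_obj h X))
    (fun X Y f => G.map_injective (by
      rw [Functor.map_comp, Functor.map_comp, eqToHom_map, eqToHom_map]
      simpa using CategoryTheory.Functor.congr_hom h f))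

variable {A A' B B' : Type*} [Category A] [Category A'] [Category B] [Category B']

lemma uncurry_nat (F : A ⥤ A') (G : B ⥤ B') (H : A' ⥤ B' ⥤ E) :
    (F.prod G) ⋙ uncurry.obj H = uncurry.obj (F ⋙ H ⋙ (whiskeringLeft B B' E).obj G) :=
  CategoryTheory.Functor.ext (by simp) (fun ⟨x₁, x₂⟩ ⟨y₁, y₂⟩ ⟨f₁, f₂⟩ => by
    dsimp
    simp [← NatTrans.naturality])

lemma curry_nat (F : A ⥤ A') (G : B ⥤ B') (K : A' × B' ⥤ E) :
    curry.obj ((F.prod G) ⋙ K) = F ⋙ curry.obj K ⋙ (whiskeringLeft B B' E).obj G := by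
  conv_lhs => rw [← Functor.uncurry_obj_curry_obj K, uncurry_nat, Functor.curry_obj_uncurry_obj]

lemma eqToHom_fst' {X Y : C × D} (p : X = Y) :
    (eqToHom p).1 = eqToHom (congrArg _root_.Prod.fst p) := by cases p; rfl

lemma eqToHom_snd' {X Y : C × D} (p : X = Y) :
    (eqToHom p).2 = eqToHom (congrArg _root_.Prod.snd p) := by cases p; rfl

lemma prod_functor_ext {P Q : A ⥤ C × D}
    (h1 : P ⋙ CategoryTheory.Prod.fst C D = Q ⋙ CategoryTheory.Prod.fst C D)
    (h2 : P ⋙ CategoryTheory.Prod.snd C D = Q ⋙ CategoryTheory.Prod.snd C D) : P = Q :=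
  CategoryTheory.Functor.ext
    (fun x => Prod.ext (CategoryTheory.Functor.congr_obj h1 x)
      (CategoryTheory.Functor.congr_obj h2 x))
    (fun x y f => by
      have a1 := CategoryTheory.Functor.congr_hom h1 f
      have a2 := CategoryTheory.Functor.congr_hom h2 f
      dsimp at a1 a2
      apply Prod.ext
      · simpa [eqToHom_fst'] using a1
      · simpa [eqToHom_snd'] using a2)

end Toolkit

/-! ### Finite products in `FCat` -/

/-- terminal object -/
def termFE : FCat.{u} :=
  ⟨Arrow.mk (𝟙 (Cat.of (Discrete PUnit.{u+1}))),
    ⟨⟨fun f => ⟨f, rfl⟩⟩, ⟨fun h => h⟩, fun _ _ h => h⟩⟩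

def toTerm (A : FCat.{u}) : A ⟶ termFE :=
  ⟨{ left := Cat.Hom.ofFunctor (Functor.star _)
     right := Cat.Hom.ofFunctor (Functor.star _)
     w := Cat.ext (Functor.punit_ext' _ _) }⟩

def termIsTerminal : IsTerminal (termFE.{u}) :=
  IsTerminal.ofUniqueHom toTerm (fun A m => by
    apply ObjectProperty.hom_ext; apply CommaMorphism.ext <;> exact Cat.ext (Functor.punit_ext' _ _))

/-- binary product -/
def prodFE (A B : FCat.{u}) : FCat.{u} :=
  ⟨Arrow.mk (X := Cat.of (↥A.obj.left × ↥B.obj.left)) (Y := Cat.of (↥A.obj.right × ↥B.obj.right))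
      ((A.obj.hom.toFunctor : ↥A.obj.left ⥤ ↥A.obj.right).prod (B.obj.hom.toFunctor : ↥B.obj.left ⥤ ↥B.obj.right)).toCatHom,
    ⟨⟨fun {X Y} f => by
        haveI := A.property.1; haveI := B.property.1
        exact ⟨((A.obj.hom.toFunctor : ↥A.obj.left ⥤ _).preimage f.1,
                (B.obj.hom.toFunctor : ↥B.obj.left ⥤ _).preimage f.2), by
          dsimp [Functor.prod]; rw [Functor.map_preimage, Functor.map_preimage]
          exact rfl⟩⟩,
      ⟨fun {X Y} {f g} h => by
        haveI := A.property.2.1; haveI := B.property.2.1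
        have h1 := congrArg _root_.Prod.fst h
        have h2 := congrArg _root_.Prod.snd h
        dsimp [Functor.prod] at h1 h2
        exact Prod.ext ((A.obj.hom.toFunctor : ↥A.obj.left ⥤ _).map_injective h1)
          ((B.obj.hom.toFunctor : ↥B.obj.left ⥤ _).map_injective h2)⟩,
      fun x y h => by
        have h1 := congrArg _root_.Prod.fst h
        have h2 := congrArg _root_.Prod.snd h
        exact Prod.ext (A.property.2.2 h1) (B.property.2.2 h2)⟩⟩

def prodFst (A B : FCat.{u}) : prodFE A B ⟶ A :=
  ⟨{ left := Cat.Hom.ofFunctor (CategoryTheory.Prod.fst _ _)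
     right := Cat.Hom.ofFunctor (CategoryTheory.Prod.fst _ _)
     w := rfl }⟩

def prodSnd (A B : FCat.{u}) : prodFE A B ⟶ B :=
  ⟨{ left := Cat.Hom.ofFunctor (CategoryTheory.Prod.snd _ _)
     right := Cat.Hom.ofFunctor (CategoryTheory.Prod.snd _ _)
     w := rfl }⟩

def prodLift {X A B : FCat.{u}} (f : X ⟶ A) (g : X ⟶ B) : X ⟶ prodFE A B :=
  ⟨{ left := Cat.Hom.ofFunctor (Functor.prod' (f.hom.left.toFunctor : ↥X.obj.left ⥤ _) (g.hom.left.toFunctor : ↥X.obj.left ⥤ _))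
     right := Cat.Hom.ofFunctor (Functor.prod' (f.hom.right.toFunctor : ↥X.obj.right ⥤ _) (g.hom.right.toFunctor : ↥X.obj.right ⥤ _))
     w := by
      have hf : f.hom.left ≫ A.obj.hom = X.obj.hom ≫ f.hom.right := f.hom.w
      have hg : g.hom.left ≫ B.obj.hom = X.obj.hom ≫ g.hom.right := g.hom.w
      apply Cat.ext
      show Functor.prod' (f.hom.left ≫ A.obj.hom).toFunctor (g.hom.left ≫ B.obj.hom).toFunctor
          = Functor.prod' (X.obj.hom ≫ f.hom.right).toFunctor (X.obj.hom ≫ g.hom.right).toFunctor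
      rw [hf, hg] }⟩

lemma prodLift_fst {X A B : FCat.{u}} (f : X ⟶ A) (g : X ⟶ B) :
    prodLift f g ≫ prodFst A B = f := rfl

lemma prodLift_snd {X A B : FCat.{u}} (f : X ⟶ A) (g : X ⟶ B) :
    prodLift f g ≫ prodSnd A B = g := rfl

lemma prod_hom_ext {X A B : FCat.{u}} {m m' : X ⟶ prodFE A B}
    (h1 : m ≫ prodFst A B = m' ≫ prodFst A B) (h2 : m ≫ prodSnd A B = m' ≫ prodSnd A B) :
    m = m' := by
  apply ObjectProperty.hom_ext
  apply CommaMorphism.ext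
  · exact Cat.ext (prod_functor_ext (congrArg (fun m => m.hom.left.toFunctor) h1) (congrArg (fun m => m.hom.left.toFunctor) h2))
  · exact Cat.ext (prod_functor_ext (congrArg (fun m => m.hom.right.toFunctor) h1) (congrArg (fun m => m.hom.right.toFunctor) h2))

def prodIsLimit (A B : FCat.{u}) : IsLimit (BinaryFan.mk (prodFst A B) (prodSnd A B)) :=
  BinaryFan.isLimitMk (fun s => prodLift s.fst s.snd)
    (fun _ => prodLift_fst _ _) (fun _ => prodLift_snd _ _)
    (fun s _ h1 h2 => prod_hom_ext (h1.trans (prodLift_fst s.fst s.snd).symm)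
      (h2.trans (prodLift_snd s.fst s.snd).symm))

noncomputable def cfp : ChosenFiniteProducts FCat.{u} :=
  { terminal := ⟨asEmptyCone termFE, termIsTerminal⟩
    product := fun A B => ⟨BinaryFan.mk (prodFst A B) (prodSnd A B), prodIsLimit A B⟩ }

/-! ### The exponential object -/

variable (B C : FCat.{u})

def FHomForget : FHom B C ⥤ (↥B.obj.right ⥤ ↥C.obj.right) where
  obj f := (f.hom.right.toFunctor : ↥B.obj.right ⥤ ↥C.obj.right)
  map α := α.hom

instance : (FHomForget B C).Faithful := ⟨fun h => InducedCategory.hom_ext h⟩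

variable {B C}

lemma fhom_ext {f g : B ⟶ C}
    (h : (f.hom.right.toFunctor : ↥B.obj.right ⥤ ↥C.obj.right) = g.hom.right.toFunctor) : f = g := by
  haveI := C.property.2.1
  apply ObjectProperty.hom_ext
  apply CommaMorphism.ext
  · exact Cat.ext (feCancel (C.obj.hom.toFunctor : ↥C.obj.left ⥤ ↥C.obj.right) C.property.2.2
      (show (f.hom.left.toFunctor : ↥B.obj.left ⥤ _) ⋙ (C.obj.hom.toFunctor : _ ⥤ _)
          = (g.hom.left.toFunctor : ↥B.obj.left ⥤ _) ⋙ (C.obj.hom.toFunctor : _ ⥤ _) by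
        have hf : f.hom.left ≫ C.obj.hom = B.obj.hom ≫ f.hom.right := Arrow.w f.hom
        have hg : g.hom.left ≫ C.obj.hom = B.obj.hom ≫ g.hom.right := Arrow.w g.hom
        rw [show ((f.hom.left.toFunctor : ↥B.obj.left ⥤ _) ⋙ (C.obj.hom.toFunctor : _ ⥤ _) : _ ⥤ _)
            = (f.hom.left ≫ C.obj.hom : B.obj.left ⟶ C.obj.right).toFunctor from rfl, hf,
          show ((g.hom.left.toFunctor : ↥B.obj.left ⥤ _) ⋙ (C.obj.hom.toFunctor : _ ⥤ _) : _ ⥤ _)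
            = (g.hom.left ≫ C.obj.hom : B.obj.left ⟶ C.obj.right).toFunctor from rfl, hg]
        exact congrArg (fun K => B.obj.hom.toFunctor ⋙ K) h))
  · exact Cat.ext h

variable (B C)

def expFE : FCat.{u} :=
  ⟨Arrow.mk (X := Cat.of (FHom B C)) (Y := Cat.of (↥B.obj.right ⥤ ↥C.obj.right))
      (FHomForget B C).toCatHom,
    ⟨⟨fun α => ⟨InducedCategory.homMk α, rfl⟩⟩, ⟨fun h => InducedCategory.hom_ext h⟩, fun _ _ h => fhom_ext h⟩⟩

/-- evaluation -/
def evF : (FHom B C × ↥B.obj.left) ⥤ ↥C.obj.right :=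
  ((𝟭 (FHom B C)).prod (B.obj.hom.toFunctor : ↥B.obj.left ⥤ ↥B.obj.right)) ⋙ uncurry.obj (FHomForget B C)

noncomputable def evLeft : (FHom B C × ↥B.obj.left) ⥤ ↥C.obj.left := by
  haveI := C.property.1; haveI := C.property.2.1
  exact feLift (C.obj.hom.toFunctor : ↥C.obj.left ⥤ ↥C.obj.right) (evF B C)
    (fun p => (p.1.hom.left.toFunctor : ↥B.obj.left ⥤ ↥C.obj.left).obj p.2)
    (fun p => CategoryTheory.Functor.congr_obj (congrArg Cat.Hom.toFunctor (Arrow.w p.1.hom)) p.2)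

noncomputable def evFE : prodFE (expFE B C) B ⟶ C :=
  ⟨{ left := Cat.Hom.ofFunctor (evLeft B C)
     right := Cat.Hom.ofFunctor (uncurry.obj (𝟭 (↥B.obj.right ⥤ ↥C.obj.right)))
     w := by
      haveI := C.property.1; haveI := C.property.2.1
      have h1 : evLeft B C ⋙ (C.obj.hom.toFunctor : ↥C.obj.left ⥤ _) = evF B C := feLift_comp _ _ _ _
      have h2 : evF B C = ((FHomForget B C).prod (B.obj.hom.toFunctor : ↥B.obj.left ⥤ _)) ⋙
          uncurry.obj (𝟭 (↥B.obj.right ⥤ ↥C.obj.right)) := by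
        show ((𝟭 (FHom B C)).prod (B.obj.hom.toFunctor : ↥B.obj.left ⥤ _)) ⋙
            uncurry.obj (FHomForget B C) = _
        rw [uncurry_nat, uncurry_nat]
        rfl
      exact Cat.ext (h1.trans h2) }⟩


/-! ### Currying -/

variable {B C}
variable {A A' : FCat.{u}}

def curryLeftObj (fm : prodFE A B ⟶ C) (a : ↥A.obj.left) : B ⟶ C :=
  ⟨{ left := Cat.Hom.ofFunctor ((curry.obj (fm.hom.left.toFunctor : ↥A.obj.left × ↥B.obj.left ⥤ ↥C.obj.left)).obj a)
     right := Cat.Hom.ofFunctor ((curry.obj (fm.hom.right.toFunctor : ↥A.obj.right × ↥B.obj.right ⥤ ↥C.obj.right)).obj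
      ((A.obj.hom.toFunctor : ↥A.obj.left ⥤ ↥A.obj.right).obj a))
     w := by
      have h0 : (fm.hom.left.toFunctor : ↥A.obj.left × ↥B.obj.left ⥤ ↥C.obj.left) ⋙
          (C.obj.hom.toFunctor : ↥C.obj.left ⥤ _)
          = ((A.obj.hom.toFunctor : ↥A.obj.left ⥤ _).prod (B.obj.hom.toFunctor : ↥B.obj.left ⥤ _)) ⋙
            (fm.hom.right.toFunctor : _ ⥤ _) := congrArg Cat.Hom.toFunctor (Arrow.w fm.hom)
      have h1 : curry.obj ((fm.hom.left.toFunctor : ↥A.obj.left × ↥B.obj.left ⥤ ↥C.obj.left) ⋙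
          (C.obj.hom.toFunctor : ↥C.obj.left ⥤ _))
          = curry.obj ((((A.obj.hom.toFunctor : ↥A.obj.left ⥤ _).prod
              (B.obj.hom.toFunctor : ↥B.obj.left ⥤ _))) ⋙ (fm.hom.right.toFunctor : _ ⥤ _)) := by erw [h0]
      erw [curry_nat] at h1
      exact Cat.ext (CategoryTheory.Functor.congr_obj h1 a) }⟩

def curryLeft (fm : prodFE A B ⟶ C) : ↥A.obj.left ⥤ FHom B C where
  obj a := curryLeftObj fm a
  map {a a'} φ := InducedCategory.homMk ((curry.obj (fm.hom.right.toFunctor : ↥A.obj.right × ↥B.obj.right ⥤ ↥C.obj.right)).map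
    ((A.obj.hom.toFunctor : ↥A.obj.left ⥤ ↥A.obj.right).map φ))
  map_id a := by
    apply InducedCategory.hom_ext
    show (curry.obj (fm.hom.right.toFunctor : _ ⥤ _)).map ((A.obj.hom.toFunctor : ↥A.obj.left ⥤ _).map (𝟙 a)) = _
    rw [CategoryTheory.Functor.map_id, CategoryTheory.Functor.map_id]
    rfl
  map_comp {a a' a''} φ ψ := by
    apply InducedCategory.hom_ext
    show (curry.obj (fm.hom.right.toFunctor : _ ⥤ _)).map ((A.obj.hom.toFunctor : ↥A.obj.left ⥤ _).map (φ ≫ ψ)) = _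
    rw [CategoryTheory.Functor.map_comp, CategoryTheory.Functor.map_comp]
    rfl

def curryFE (fm : prodFE A B ⟶ C) : A ⟶ expFE B C :=
  ⟨{ left := Cat.Hom.ofFunctor (curryLeft fm)
     right := Cat.Hom.ofFunctor (curry.obj (fm.hom.right.toFunctor : ↥A.obj.right × ↥B.obj.right ⥤ ↥C.obj.right))
     w := rfl }⟩

/-! ### Uncurrying -/

def uncurryF (g : A ⟶ expFE B C) : (↥A.obj.left × ↥B.obj.left) ⥤ ↥C.obj.right :=
  ((g.hom.left.toFunctor : ↥A.obj.left ⥤ FHom B C).prod (B.obj.hom.toFunctor : ↥B.obj.left ⥤ ↥B.obj.right)) ⋙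
    uncurry.obj (FHomForget B C)

noncomputable def uncurryLeft (g : A ⟶ expFE B C) :
    (↥A.obj.left × ↥B.obj.left) ⥤ ↥C.obj.left := by
  haveI := C.property.1; haveI := C.property.2.1
  exact feLift (C.obj.hom.toFunctor : ↥C.obj.left ⥤ ↥C.obj.right) (uncurryF g)
    (fun p => (((g.hom.left.toFunctor : ↥A.obj.left ⥤ FHom B C).obj p.1).hom.left.toFunctor : ↥B.obj.left ⥤ _).obj p.2)
    (fun p => CategoryTheory.Functor.congr_obj
      (congrArg Cat.Hom.toFunctor (Arrow.w ((g.hom.left.toFunctor : ↥A.obj.left ⥤ FHom B C).obj p.1).hom)) p.2)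

noncomputable def uncurryFE (g : A ⟶ expFE B C) : prodFE A B ⟶ C :=
  ⟨{ left := Cat.Hom.ofFunctor (uncurryLeft g)
     right := Cat.Hom.ofFunctor (uncurry.obj (g.hom.right.toFunctor : ↥A.obj.right ⥤ (↥B.obj.right ⥤ ↥C.obj.right)))
     w := by
      haveI := C.property.1; haveI := C.property.2.1
      have h1 : uncurryLeft g ⋙ (C.obj.hom.toFunctor : ↥C.obj.left ⥤ _) = uncurryF g := feLift_comp _ _ _ _
      have h2 : uncurryF g = ((A.obj.hom.toFunctor : ↥A.obj.left ⥤ _).prod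
          (B.obj.hom.toFunctor : ↥B.obj.left ⥤ _)) ⋙ uncurry.obj (g.hom.right.toFunctor : _ ⥤ _) := by
        show ((g.hom.left.toFunctor : ↥A.obj.left ⥤ FHom B C).prod (B.obj.hom.toFunctor : ↥B.obj.left ⥤ _)) ⋙
            uncurry.obj (FHomForget B C) = _
        erw [uncurry_nat, uncurry_nat]
        exact congrArg (fun K : ↥A.obj.left ⥤ (↥B.obj.right ⥤ ↥C.obj.right) =>
          uncurry.obj (K ⋙ (whiskeringLeft _ _ _).obj (B.obj.hom.toFunctor : ↥B.obj.left ⥤ _)))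
          (show (g.hom.left.toFunctor : ↥A.obj.left ⥤ FHom B C) ⋙ FHomForget B C
            = (A.obj.hom.toFunctor : ↥A.obj.left ⥤ _) ⋙ (g.hom.right.toFunctor : _ ⥤ _) from congrArg Cat.Hom.toFunctor (Arrow.w g.hom))
      exact Cat.ext (h1.trans h2) }⟩

/-! ### Roundtrips -/

lemma curry_uncurry (g : A ⟶ expFE B C) : curryFE (uncurryFE g) = g := by
  apply ObjectProperty.hom_ext
  apply CommaMorphism.ext
  · exact Cat.ext (feCancel (FHomForget B C) (fun _ _ h => fhom_ext h)
      (by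
        show (A.obj.hom.toFunctor : ↥A.obj.left ⥤ _) ⋙ curry.obj (uncurry.obj
            (g.hom.right.toFunctor : ↥A.obj.right ⥤ _)) = (g.hom.left.toFunctor : _ ⥤ _) ⋙ FHomForget B C
        erw [Functor.curry_obj_uncurry_obj]
        exact (congrArg Cat.Hom.toFunctor (Arrow.w g.hom)).symm))
  · exact Cat.ext (Functor.curry_obj_uncurry_obj _)

lemma uncurry_curry (fm : prodFE A B ⟶ C) : uncurryFE (curryFE fm) = fm := by
  haveI := C.property.1; haveI := C.property.2.1
  apply ObjectProperty.hom_ext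
  apply CommaMorphism.ext
  · apply Cat.ext
    apply feCancel (C.obj.hom.toFunctor : ↥C.obj.left ⥤ ↥C.obj.right) C.property.2.2
    have e1 : (uncurryFE (curryFE fm)).hom.left.toFunctor ⋙ (C.obj.hom.toFunctor : ↥C.obj.left ⥤ _)
        = uncurryF (curryFE fm) := feLift_comp _ _ _ _
    rw [e1]
    show ((curryLeft fm).prod (B.obj.hom.toFunctor : ↥B.obj.left ⥤ _)) ⋙
        uncurry.obj (FHomForget B C) = _
    rw [uncurry_nat]
    show uncurry.obj ((A.obj.hom.toFunctor : ↥A.obj.left ⥤ _) ⋙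
        (curry.obj (fm.hom.right.toFunctor : ↥A.obj.right × ↥B.obj.right ⥤ _) ⋙
          (whiskeringLeft _ _ _).obj (B.obj.hom.toFunctor : ↥B.obj.left ⥤ _))) = _
    erw [← uncurry_nat, Functor.uncurry_obj_curry_obj]
    exact (congrArg Cat.Hom.toFunctor (Arrow.w fm.hom)).symm
  · exact Cat.ext (Functor.uncurry_obj_curry_obj _)


/-! ### Naturality of currying -/

lemma curryFE_nat (f : A' ⟶ A) (g : prodFE A B ⟶ C) :
    curryFE (prodLift (prodFst A' B ≫ f) (prodSnd A' B) ≫ g) = f ≫ curryFE g := by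
  apply ObjectProperty.hom_ext
  apply CommaMorphism.ext
  · apply Cat.ext
    apply feCancel (FHomForget B C) (fun _ _ h => fhom_ext h)
    show (A'.obj.hom.toFunctor : ↥A'.obj.left ⥤ _) ⋙
        curry.obj (((f.hom.right.toFunctor : ↥A'.obj.right ⥤ _).prod (𝟭 ↥B.obj.right)) ⋙
          (g.hom.right.toFunctor : ↥A.obj.right × ↥B.obj.right ⥤ _))
        = (f.hom.left.toFunctor : ↥A'.obj.left ⥤ _) ⋙ ((A.obj.hom.toFunctor : ↥A.obj.left ⥤ _) ⋙
          curry.obj (g.hom.right.toFunctor : ↥A.obj.right × ↥B.obj.right ⥤ _))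
    erw [curry_nat]
    have hw : (A'.obj.hom.toFunctor : ↥A'.obj.left ⥤ _) ⋙ (f.hom.right.toFunctor : ↥A'.obj.right ⥤ _)
        = (f.hom.left.toFunctor : ↥A'.obj.left ⥤ _) ⋙ (A.obj.hom.toFunctor : ↥A.obj.left ⥤ _) := (congrArg Cat.Hom.toFunctor (Arrow.w f.hom)).symm
    exact congrArg (fun K : ↥A'.obj.left ⥤ ↥A.obj.right =>
      K ⋙ curry.obj (g.hom.right.toFunctor : ↥A.obj.right × ↥B.obj.right ⥤ _)) hw
  · apply Cat.ext
    show curry.obj (((f.hom.right.toFunctor : ↥A'.obj.right ⥤ _).prod (𝟭 ↥B.obj.right)) ⋙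
        (g.hom.right.toFunctor : ↥A.obj.right × ↥B.obj.right ⥤ _)) = _
    erw [curry_nat]
    rfl

/-! ### Cartesian closed structure -/

noncomputable instance : ChosenFiniteProducts FCat.{u} := cfp

noncomputable instance : MonoidalCategory FCat.{u} :=
  (CartesianMonoidalCategory.ofChosenFiniteProducts ChosenFiniteProducts.terminal
    ChosenFiniteProducts.product).toMonoidalCategory

def swapFE (A B : FCat.{u}) : prodFE A B ⟶ prodFE B A := prodLift (prodSnd A B) (prodFst A B)

variable (B)

noncomputable def expEquiv (X Y : FCat.{u}) :
    ((MonoidalCategory.tensorLeft B).obj X ⟶ Y) ≃ (X ⟶ expFE B Y) where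
  toFun g := curryFE (swapFE X B ≫ g)
  invFun h := swapFE B X ≫ uncurryFE h
  left_inv g := by
    show swapFE B X ≫ uncurryFE (curryFE (swapFE X B ≫ g)) = g
    rw [uncurry_curry]; rfl
  right_inv h := by
    show curryFE (uncurryFE h) = h
    exact curry_uncurry h

lemma expEquiv_nat (X' X Y : FCat.{u}) (f : X' ⟶ X)
    (g : (MonoidalCategory.tensorLeft B).obj X ⟶ Y) :
    expEquiv B X' Y ((MonoidalCategory.tensorLeft B).map f ≫ g)
      = f ≫ expEquiv B X Y g := by
  show curryFE (prodLift (prodFst X' B ≫ f) (prodSnd X' B) ≫ (swapFE X B ≫ g))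
      = f ≫ curryFE (swapFE X B ≫ g)
  exact curryFE_nat f (swapFE X B ≫ g)

noncomputable instance : _root_.CartesianClosed FCat.{u} :=
  MonoidalClosed.mk (fun B =>
    Closed.mk _ (Adjunction.adjunctionOfEquivRight (expEquiv B)
      (fun X' X Y f g => expEquiv_nat B X' X Y f g)))


end FCCAux

/-- The category `F` of full embeddings is cartesian closed, and the
internal hom `[B, C]` has tight part (isomorphic to) the hom-category `F(B, C)` and
loose part (isomorphic to) the functor category `Cat(B_λ, C_λ)`. -/
theorem FCat_cartesianClosed_internal_hom :
    ∃ cfp : ChosenFiniteProducts FCat.{u},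
      Nonempty (@CartesianClosed FCat.{u} _ cfp) ∧
      ∀ B C : FCat.{u}, ∃ (E : FCat.{u})
        (ev : (cfp.product E B).cone.pt ⟶ C),
        (∀ (A : FCat.{u}) (fm : (cfp.product A B).cone.pt ⟶ C),
          ∃! gm : A ⟶ E,
            (cfp.product E B).isLimit.lift
                (Limits.BinaryFan.mk
                  (Limits.BinaryFan.fst (cfp.product A B).cone ≫ gm)
                  (Limits.BinaryFan.snd (cfp.product A B).cone)) ≫ ev = fm) ∧
        Nonempty ((E.obj.left : Cat.{u, u}) ≅ Cat.of (FHom B C)) ∧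
        Nonempty ((E.obj.right : Cat.{u, u}) ≅
          Cat.of (↥B.obj.right ⥤ ↥C.obj.right)) := by
  refine ⟨FCCAux.cfp, ⟨inferInstance⟩,
    fun B C => ⟨FCCAux.expFE B C, FCCAux.evFE B C, ?_, ⟨Iso.refl _⟩, ⟨Iso.refl _⟩⟩⟩
  intro A fm
  refine ⟨FCCAux.curryFE fm, ?_, ?_⟩
  · show FCCAux.uncurryFE (FCCAux.curryFE fm) = fm
    exact FCCAux.uncurry_curry fm
  · intro gm h
    have h' : FCCAux.uncurryFE gm = fm := h
    rw [← h']
    exact (FCCAux.curry_uncurry gm).symm
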